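/- Let Ψ > 0, κ₁ > 0, κ₂ > 0, and let a, B₃, B₄ be real numbers. Then, as t → +∞, the difference F(κ₁·t + a, κ₂·t + B₃) − F(κ₁·t + a, κ₂·t − B₄) converges to π·(B₃ + B₄)/(2Ψ). -/

import Mathlib

open Real Filter
open Topology

/-- `F(x, y) := arcsinh(x/√(Ψ² + y²)) + (y/Ψ)·arctan(x·y/(Ψ·√(Ψ² + x² + y²)))`. -/
noncomputable def F (Ψ x y : ℝ) : ℝ :=
  Real.arsinh (x / Real.sqrt (Ψ ^ 2 + y ^ 2)) +
    (y / Ψ) * Real.arctan (x * y / (Ψ * Real.sqrt (Ψ ^ 2 + x ^ 2 + y ^ 2)))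

private lemma lin_div (κ c : ℝ) :
    Tendsto (fun t : ℝ => (κ * t + c) / t) atTop (𝓝 κ) := by
  have h : Tendsto (fun t : ℝ => κ + c / t) atTop (𝓝 (κ + 0)) :=
    tendsto_const_nhds.add (tendsto_const_nhds.div_atTop tendsto_id)
  rw [add_zero] at h
  refine h.congr' ?_
  filter_upwards [eventually_gt_atTop (0:ℝ)] with t ht
  field_simp

private lemma lin_atTop {κ : ℝ} (hκ : 0 < κ) (c : ℝ) :
    Tendsto (fun t : ℝ => κ * t + c) atTop atTop :=
  tendsto_atTop_add_const_right _ c (tendsto_id.const_mul_atTop hκ)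

private lemma sqrt_div {f : ℝ → ℝ} {L : ℝ} (hf : ∀ t, 0 ≤ f t)
    (h : Tendsto (fun t => f t / t ^ 2) atTop (𝓝 L)) :
    Tendsto (fun t => Real.sqrt (f t) / t) atTop (𝓝 (Real.sqrt L)) := by
  refine h.sqrt.congr' ?_
  filter_upwards [eventually_gt_atTop (0:ℝ)] with t ht
  rw [Real.sqrt_div (hf t), Real.sqrt_sq ht.le]

theorem stmt_12 (Ψ κ₁ κ₂ a B₃ B₄ : ℝ) (hΨ : 0 < Ψ) (hκ₁ : 0 < κ₁) (hκ₂ : 0 < κ₂) :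
    Filter.Tendsto
      (fun t : ℝ => F Ψ (κ₁ * t + a) (κ₂ * t + B₃) - F Ψ (κ₁ * t + a) (κ₂ * t - B₄))
      Filter.atTop (nhds (Real.pi * (B₃ + B₄) / (2 * Ψ))) := by
  have hΨ' : Ψ ≠ 0 := hΨ.ne'
  set x : ℝ → ℝ := fun t => κ₁ * t + a with hxdef
  have hsubeq : ∀ t : ℝ, κ₂ * t - B₄ = κ₂ * t + (-B₄) := fun t => by ring
  -- basic limits
  have hx : Tendsto (fun t => x t / t) atTop (𝓝 κ₁) := lin_div κ₁ a
  have hy : ∀ c : ℝ, Tendsto (fun t => (κ₂ * t + c) / t) atTop (𝓝 κ₂) := fun c => lin_div κ₂ c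
  have hy' : Tendsto (fun t => (κ₂ * t - B₄) / t) atTop (𝓝 κ₂) := by
    simpa [sub_eq_add_neg] using lin_div κ₂ (-B₄)
  set R : ℝ := Real.sqrt (κ₁ ^ 2 + κ₂ ^ 2) with hRdef
  have hRpos : 0 < R := Real.sqrt_pos.mpr (by positivity)
  -- sqrt limits
  have hs : ∀ c : ℝ, Tendsto (fun t => Real.sqrt (Ψ ^ 2 + (κ₂ * t + c) ^ 2) / t) atTop (𝓝 κ₂) := by
    intro c
    have h0 : Tendsto (fun t : ℝ => (Ψ / t) ^ 2 + ((κ₂ * t + c) / t) ^ 2) atTop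
        (𝓝 ((0:ℝ) ^ 2 + κ₂ ^ 2)) :=
      ((tendsto_const_nhds.div_atTop tendsto_id).pow 2).add ((hy c).pow 2)
    have h0' : Tendsto (fun t : ℝ => (Ψ ^ 2 + (κ₂ * t + c) ^ 2) / t ^ 2) atTop (𝓝 (κ₂ ^ 2)) := by
      norm_num at h0
      refine h0.congr' ?_
      filter_upwards [eventually_gt_atTop (0:ℝ)] with t ht
      field_simp
    have := sqrt_div (fun t => by positivity) h0'
    rwa [Real.sqrt_sq hκ₂.le] at this
  have hr : ∀ c : ℝ, Tendsto (fun t => Real.sqrt (Ψ ^ 2 + x t ^ 2 + (κ₂ * t + c) ^ 2) / t)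
      atTop (𝓝 R) := by
    intro c
    have h0 : Tendsto (fun t : ℝ => (Ψ / t) ^ 2 + (x t / t) ^ 2 + ((κ₂ * t + c) / t) ^ 2) atTop
        (𝓝 ((0:ℝ) ^ 2 + κ₁ ^ 2 + κ₂ ^ 2)) :=
      (((tendsto_const_nhds.div_atTop tendsto_id).pow 2).add (hx.pow 2)).add ((hy c).pow 2)
    have h0' : Tendsto (fun t : ℝ => (Ψ ^ 2 + x t ^ 2 + (κ₂ * t + c) ^ 2) / t ^ 2) atTop
        (𝓝 (κ₁ ^ 2 + κ₂ ^ 2)) := by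
      norm_num at h0
      refine h0.congr' ?_
      filter_upwards [eventually_gt_atTop (0:ℝ)] with t ht
      simp only [hxdef]
      field_simp
    exact sqrt_div (fun t => by positivity) h0'
  -- arsinh arguments
  have hars : ∀ c : ℝ, Tendsto (fun t => x t / Real.sqrt (Ψ ^ 2 + (κ₂ * t + c) ^ 2)) atTop
      (𝓝 (κ₁ / κ₂)) := by
    intro c
    refine (hx.div (hs c) hκ₂.ne').congr' ?_
    filter_upwards [eventually_gt_atTop (0:ℝ)] with t ht
    have hsq : Real.sqrt (Ψ ^ 2 + (κ₂ * t + c) ^ 2) ≠ 0 :=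
      (Real.sqrt_pos.mpr (by positivity)).ne'
    simp only [Pi.div_apply]
    field_simp
  -- g tends to atTop
  set g : ℝ → ℝ → ℝ := fun c t =>
    x t * (κ₂ * t + c) / (Ψ * Real.sqrt (Ψ ^ 2 + x t ^ 2 + (κ₂ * t + c) ^ 2)) with hgdef
  have hg : ∀ c : ℝ, Tendsto (g c) atTop atTop := by
    intro c
    have hb : Tendsto (fun t => (x t / t) * ((κ₂ * t + c) / t) /
        (Ψ * (Real.sqrt (Ψ ^ 2 + x t ^ 2 + (κ₂ * t + c) ^ 2) / t))) atTop
        (𝓝 (κ₁ * κ₂ / (Ψ * R))) :=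
      (hx.mul (hy c)).div (tendsto_const_nhds.mul (hr c)) (by positivity)
    have := Filter.Tendsto.atTop_mul_pos (f := fun t : ℝ => t)
      (show 0 < κ₁ * κ₂ / (Ψ * R) by positivity) tendsto_id hb
    refine this.congr' ?_
    filter_upwards [eventually_gt_atTop (0:ℝ)] with t ht
    have hsq : Real.sqrt (Ψ ^ 2 + x t ^ 2 + (κ₂ * t + c) ^ 2) ≠ 0 :=
      (Real.sqrt_pos.mpr (by positivity)).ne'
    simp only [hgdef]
    field_simp
  -- arctan g → π/2
  have harc : ∀ c : ℝ, Tendsto (fun t => Real.arctan (g c t)) atTop (𝓝 (π / 2)) := fun c =>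
    (Real.tendsto_arctan_atTop.mono_right nhdsWithin_le_nhds).comp (hg c)
  -- slope of arctan at 0
  have hslope : Tendsto (fun u : ℝ => Real.arctan u / u) (𝓝[≠] (0:ℝ)) (𝓝 1) := by
    have h := hasDerivAt_iff_tendsto_slope.mp (Real.hasDerivAt_arctan 0)
    simp only [funext (slope_def_field Real.arctan 0), Real.arctan_zero] at h
    norm_num at h
    refine h.congr fun u => ?_
    simp [slope_def_field, div_eq_mul_inv]
  -- inverse of g within ≠ 0
  have hginv : ∀ c : ℝ, Tendsto (fun t => (g c t)⁻¹) atTop (𝓝[≠] (0:ℝ)) := by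
    intro c
    refine tendsto_nhdsWithin_of_tendsto_nhds_of_eventually_within _ (hg c).inv_tendsto_atTop ?_
    filter_upwards [(hg c).eventually_gt_atTop 0] with t ht
    exact (inv_pos.mpr ht).ne'
  have hslopeg : ∀ c : ℝ, Tendsto (fun t => Real.arctan (g c t)⁻¹ / (g c t)⁻¹) atTop (𝓝 1) :=
    fun c => hslope.comp (hginv c)
  -- y₂ * g⁻¹ limit
  set L : ℝ := Ψ * (κ₂ * R) / (κ₁ * κ₂) with hLdef
  have hprod : ∀ c : ℝ, Tendsto (fun t => (κ₂ * t - B₄) * (g c t)⁻¹) atTop (𝓝 L) := by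
    intro c
    have hb : Tendsto (fun t => Ψ * (((κ₂ * t - B₄) / t) *
        (Real.sqrt (Ψ ^ 2 + x t ^ 2 + (κ₂ * t + c) ^ 2) / t)) /
        ((x t / t) * ((κ₂ * t + c) / t))) atTop (𝓝 L) := by
      have := ((tendsto_const_nhds (x := Ψ)).mul (hy'.mul (hr c))).div
        (hx.mul (hy c)) (by positivity)
      simpa [hLdef, mul_assoc, Pi.div_def] using this
    refine hb.congr' ?_
    filter_upwards [eventually_gt_atTop (0:ℝ), (lin_atTop hκ₁ a).eventually_gt_atTop 0,
      (lin_atTop hκ₂ c).eventually_gt_atTop 0] with t ht hxt hyt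
    have hsq : (0:ℝ) < Real.sqrt (Ψ ^ 2 + x t ^ 2 + (κ₂ * t + c) ^ 2) :=
      Real.sqrt_pos.mpr (by positivity)
    simp only [hgdef, hxdef] at hxt ⊢
    rw [inv_div]
    field_simp
  have hLterm : ∀ c : ℝ, Tendsto (fun t => (κ₂ * t - B₄) * Real.arctan (g c t)⁻¹) atTop
      (𝓝 L) := by
    intro c
    have := (hprod c).mul (hslopeg c)
    rw [mul_one] at this
    refine this.congr' ?_
    filter_upwards [(hg c).eventually_gt_atTop 0] with t ht
    have : (g c t)⁻¹ ≠ 0 := (inv_pos.mpr ht).ne'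
    field_simp
  -- the three pieces
  have hA : Tendsto (fun t => Real.arsinh (x t / Real.sqrt (Ψ ^ 2 + (κ₂ * t + B₃) ^ 2)) -
      Real.arsinh (x t / Real.sqrt (Ψ ^ 2 + (κ₂ * t - B₄) ^ 2))) atTop (𝓝 0) := by
    have h1 := (Real.continuous_arsinh.continuousAt (x := κ₁ / κ₂)).tendsto.comp (hars B₃)
    have hars2 : Tendsto (fun t => x t / Real.sqrt (Ψ ^ 2 + (κ₂ * t - B₄) ^ 2)) atTop
        (𝓝 (κ₁ / κ₂)) := by simpa [sub_eq_add_neg] using hars (-B₄)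
    have h2 := (Real.continuous_arsinh.continuousAt (x := κ₁ / κ₂)).tendsto.comp hars2
    simpa using h1.sub h2
  have hB : Tendsto (fun t => ((B₃ + B₄) / Ψ) * Real.arctan (g B₃ t)) atTop
      (𝓝 ((B₃ + B₄) / Ψ * (π / 2))) := tendsto_const_nhds.mul (harc B₃)
  have hC : Tendsto (fun t => ((κ₂ * t - B₄) / Ψ) *
      (Real.arctan (g B₃ t) - Real.arctan (g (-B₄) t))) atTop (𝓝 0) := by
    have h0 : Tendsto (fun t => (1 / Ψ) * ((κ₂ * t - B₄) * Real.arctan (g (-B₄) t)⁻¹ -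
        (κ₂ * t - B₄) * Real.arctan (g B₃ t)⁻¹)) atTop (𝓝 ((1/Ψ) * (L - L))) :=
      tendsto_const_nhds.mul ((hLterm (-B₄)).sub (hLterm B₃))
    rw [sub_self, mul_zero] at h0
    refine h0.congr' ?_
    filter_upwards [(hg B₃).eventually_gt_atTop 0, (hg (-B₄)).eventually_gt_atTop 0]
      with t h1 h2
    rw [Real.arctan_inv_of_pos h1, Real.arctan_inv_of_pos h2]
    ring
  -- combine
  have hsum := (hA.add hB).add hC
  rw [zero_add, add_zero] at hsum
  have hval : (B₃ + B₄) / Ψ * (π / 2) = π * (B₃ + B₄) / (2 * Ψ) := by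
    field_simp
  rw [hval] at hsum
  refine hsum.congr (fun t => ?_)
  simp only [F, hgdef, hxdef, hsubeq t]
  ring
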